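/- With T as above and p(z) := (1-T(z)) - T'(z)(1-z), the function p satisfies p'(z) = -T''(z)(1-z); consequently p is strictly increasing on (0,b) and strictly decreasing on (b,1), with p(0+) = 1 - T'(0+) < 0 and p(b) > 0; hence p has a unique zero a in (0,b). -/

import Mathlib

open Set Filter

/-- with `p(z) = (1-T(z)) - T'(z)(1-z)`, one has
`p'(z) = -T''(z)(1-z)`; `p` is strictly increasing on `(0,b)`, strictly
decreasing on `(b,1)`, `p(0+) = 1 - T'(0+) < 0`, `p(b) > 0`; hence `p` has a
unique zero `a` in `(0,b)`. -/
theorem p_unique_zero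
    (T : ℝ → ℝ) (b : ℝ) (hb : b ∈ Ioo (0:ℝ) 1)
    (hTcont : ContinuousOn T (Icc 0 1))
    (hTmono : StrictMonoOn T (Icc 0 1))
    (hT0 : T 0 = 0) (hT1 : T 1 = 1)
    (hTdiff : ∀ z ∈ Ioo (0:ℝ) 1, DifferentiableAt ℝ T z)
    (hTdiff2 : ∀ z ∈ Ioo (0:ℝ) 1, DifferentiableAt ℝ (deriv T) z)
    (hT'anti : StrictAntiOn (deriv T) (Ioo 0 b))
    (hT'mono : StrictMonoOn (deriv T) (Ioo b 1))
    (L : ℝ) (hT'0 : Tendsto (deriv T) (nhdsWithin 0 (Ioi 0)) (nhds L)) (hL : 1 < L)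
    (hT'1 : Tendsto (deriv T) (nhdsWithin 1 (Iio 1)) atTop)
    (p : ℝ → ℝ) (hp : ∀ z, p z = (1 - T z) - deriv T z * (1 - z)) :
    (∀ z ∈ Ioo (0:ℝ) 1, deriv p z = -(deriv (deriv T) z) * (1 - z)) ∧
    StrictMonoOn p (Ioo 0 b) ∧
    StrictAntiOn p (Ioo b 1) ∧
    Tendsto p (nhdsWithin 0 (Ioi 0)) (nhds (1 - L)) ∧ 1 - L < 0 ∧
    p b > 0 ∧
    (∃! a : ℝ, a ∈ Ioo 0 b ∧ p a = 0) := by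
  obtain ⟨hb0, hb1⟩ := hb
  -- Mean value theorem helper
  have mvt : ∀ x y : ℝ, 0 ≤ x → y ≤ 1 → x < y →
      ∃ c ∈ Ioo x y, T y - T x = deriv T c * (y - x) := by
    intro x y hx hy hxy
    obtain ⟨c, hc, hslope⟩ := exists_deriv_eq_slope T hxy
      (hTcont.mono (Icc_subset_Icc hx hy))
      (fun z hz => (hTdiff z ⟨lt_of_le_of_lt hx hz.1, lt_of_lt_of_le hz.2 hy⟩).differentiableWithinAt)
    refine ⟨c, hc, ?_⟩
    rw [eq_div_iff (by linarith : y - x ≠ 0)] at hslope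
    linarith
  -- derivative formula
  have hderiv : ∀ z ∈ Ioo (0:ℝ) 1, deriv p z = -(deriv (deriv T) z) * (1 - z) := by
    intro z hz
    have h1 : HasDerivAt T (deriv T z) z := (hTdiff z hz).hasDerivAt
    have h2 : HasDerivAt (deriv T) (deriv (deriv T) z) z := (hTdiff2 z hz).hasDerivAt
    have h3 : HasDerivAt (fun w => (1 - T w) - deriv T w * (1 - w))
        (-(deriv (deriv T) z) * (1 - z)) z := by
      have h := ((hasDerivAt_const z (1:ℝ)).sub h1).sub
        (h2.mul ((hasDerivAt_const z (1:ℝ)).sub (hasDerivAt_id z)))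
      simp only [Pi.sub_def, Pi.mul_def, id_eq] at h
      exact h.congr_deriv (by ring)
    have hpe : p = fun w => (1 - T w) - deriv T w * (1 - w) := funext hp
    rw [hpe, h3.deriv]
  -- strict monotone on (0,b)
  have hmono : StrictMonoOn p (Ioo 0 b) := by
    intro x hx y hy hxy
    obtain ⟨c, hc, hT'⟩ := mvt x y (le_of_lt hx.1) (le_of_lt (lt_trans hy.2 hb1)) hxy
    have hcmem : c ∈ Ioo 0 b := ⟨lt_trans hx.1 hc.1, lt_trans hc.2 hy.2⟩
    have h1 : deriv T c < deriv T x := hT'anti hx hcmem hc.1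
    have h2 : deriv T y < deriv T c := hT'anti hcmem hy hc.2
    have hkey : p y - p x = (deriv T x - deriv T c) * (y - x)
        + (deriv T x - deriv T y) * (1 - y) := by
      rw [hp x, hp y]; nlinarith [hT']
    have hy1 : y < 1 := lt_trans hy.2 hb1
    have t1 : 0 < (deriv T x - deriv T c) * (y - x) :=
      mul_pos (by linarith) (by linarith)
    have t2 : 0 < (deriv T x - deriv T y) * (1 - y) :=
      mul_pos (by linarith) (by linarith)
    linarith
  -- strict anti on (b,1)
  have hanti : StrictAntiOn p (Ioo b 1) := by
    intro x hx y hy hxy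
    obtain ⟨c, hc, hT'⟩ := mvt x y (le_of_lt (lt_trans hb0 hx.1)) (le_of_lt hy.2) hxy
    have hcmem : c ∈ Ioo b 1 := ⟨lt_trans hx.1 hc.1, lt_trans hc.2 hy.2⟩
    have h1 : deriv T x < deriv T c := hT'mono hx hcmem hc.1
    have h2 : deriv T c < deriv T y := hT'mono hcmem hy hc.2
    have hkey : p y - p x = (deriv T x - deriv T c) * (y - x)
        + (deriv T x - deriv T y) * (1 - y) := by
      rw [hp x, hp y]; nlinarith [hT']
    have t1 : (deriv T x - deriv T c) * (y - x) < 0 :=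
      mul_neg_of_neg_of_pos (by linarith) (by linarith)
    have t2 : (deriv T x - deriv T y) * (1 - y) < 0 :=
      mul_neg_of_neg_of_pos (by linarith) (by linarith [hy.2])
    linarith
  -- limit at 0+
  have hTt : Tendsto T (nhdsWithin 0 (Ioi 0)) (nhds 0) := by
    have h1 : Tendsto T (nhdsWithin 0 (Icc 0 1)) (nhds (T 0)) :=
      hTcont.continuousWithinAt (left_mem_Icc.2 zero_le_one)
    rw [hT0] at h1
    have h2 : nhdsWithin (0:ℝ) (Ioi 0) = nhdsWithin 0 (Ioo 0 1) :=
      (nhdsWithin_Ioo_eq_nhdsGT one_pos).symm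
    rw [h2]
    exact h1.mono_left (nhdsWithin_mono 0 Ioo_subset_Icc_self)
  have hzt : Tendsto (fun z : ℝ => 1 - z) (nhdsWithin (0:ℝ) (Ioi 0)) (nhds 1) := by
    have : Tendsto (fun z : ℝ => 1 - z) (nhds 0) (nhds (1 - 0)) :=
      (continuous_const.sub continuous_id).tendsto 0
    simpa using this.mono_left nhdsWithin_le_nhds
  have hptend : Tendsto p (nhdsWithin 0 (Ioi 0)) (nhds (1 - L)) := by
    have h : Tendsto (fun z => (1 - T z) - deriv T z * (1 - z))
        (nhdsWithin 0 (Ioi 0)) (nhds ((1 - 0) - L * 1)) :=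
      (tendsto_const_nhds.sub hTt).sub (hT'0.mul hzt)
    have hpe : p = fun w => (1 - T w) - deriv T w * (1 - w) := funext hp
    rw [hpe]
    convert h using 2; ring
  have hLneg : (1:ℝ) - L < 0 := by linarith
  -- p b > 0
  have hpb : p b > 0 := by
    obtain ⟨c, hc, hT'⟩ := mvt b 1 (le_of_lt hb0) le_rfl hb1
    rw [hT1] at hT'
    -- T'(b) ≤ T'(c') < T'(c) for c' ∈ (b,c)
    obtain ⟨c', hc'⟩ : ∃ c', b < c' ∧ c' < c := exists_between hc.1
    have hc'mem : c' ∈ Ioo b 1 := ⟨hc'.1, lt_trans hc'.2 hc.2⟩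
    have h1 : deriv T c' < deriv T c := hT'mono hc'mem hc hc'.2
    have hcontb : Tendsto (deriv T) (nhdsWithin b (Ioi b)) (nhds (deriv T b)) :=
      ((hTdiff2 b ⟨hb0, hb1⟩).continuousAt.continuousWithinAt).tendsto
    have h2 : deriv T b ≤ deriv T c' := by
      refine le_of_tendsto hcontb ?_
      filter_upwards [Ioo_mem_nhdsGT_of_mem (left_mem_Ico.2 hc'.1)] with x hx
      exact le_of_lt (hT'mono ⟨hx.1, lt_trans hx.2 hc'mem.2⟩ hc'mem hx.2)
    have : deriv T b < deriv T c := lt_of_le_of_lt h2 h1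
    rw [hp b]
    nlinarith [hT']
  -- unique zero
  have hpcontAt : ∀ z ∈ Ioo (0:ℝ) 1, ContinuousAt p z := by
    intro z hz
    have hpe : p = fun w => (1 - T w) - deriv T w * (1 - w) := funext hp
    rw [hpe]
    exact ((continuousAt_const.sub (hTdiff z hz).continuousAt).sub
      ((hTdiff2 z hz).continuousAt.mul (continuousAt_const.sub continuousAt_id)))
  obtain ⟨x, hxneg, hxmem⟩ :
      ∃ x, p x < 0 ∧ x ∈ Ioo 0 b := by
    have h1 : ∀ᶠ z in nhdsWithin 0 (Ioi 0), p z < 0 :=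
      hptend.eventually_lt_const hLneg
    have h2 : Ioo (0:ℝ) b ∈ nhdsWithin 0 (Ioi 0) :=
      Ioo_mem_nhdsGT_of_mem (left_mem_Ico.2 hb0)
    exact (h1.and (eventually_of_mem h2 (fun z hz => hz))).exists
  have hsub : Icc x b ⊆ Ioo 0 1 := fun z hz => ⟨lt_of_lt_of_le hxmem.1 hz.1, lt_of_le_of_lt hz.2 hb1⟩
  have hcont : ContinuousOn p (Icc x b) := fun z hz =>
    (hpcontAt z (hsub hz)).continuousWithinAt
  have hivt := intermediate_value_Ioo (le_of_lt hxmem.2) hcont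
  obtain ⟨a, ha, hpa⟩ := hivt (show (0:ℝ) ∈ Ioo (p x) (p b) from ⟨hxneg, hpb⟩)
  have hamem : a ∈ Ioo 0 b := ⟨lt_trans hxmem.1 ha.1, ha.2⟩
  refine ⟨hderiv, hmono, hanti, hptend, hLneg, hpb, a, ⟨hamem, hpa⟩, ?_⟩
  intro y hy
  exact hmono.injOn hy.1 hamem (by rw [hy.2, hpa])
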